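/- If S is a numerical semigroup, then there exists k ∈ ℕ such that S ∈ 𝒥^k(ℕ). -/

import Mathlib

/-- A numerical semigroup: a subset of ℕ containing 0, closed under addition,
with finite complement. -/
def IsNumSgp (S : Set ℕ) : Prop :=
  0 ∈ S ∧ (∀ a ∈ S, ∀ b ∈ S, a + b ∈ S) ∧ Sᶜ.Finite

/-- Pseudo-Frobenius numbers of `S`. -/
def PF (S : Set ℕ) : Set ℕ :=
  {x | x ∉ S ∧ ∀ s ∈ S, s ≠ 0 → x + s ∈ S}

/-- `I` is an ideal of `Δ`: nonempty, contained in `Δ`, and `I + Δ ⊆ I`. -/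
def IsIdealOf (I Δ : Set ℕ) : Prop :=
  I.Nonempty ∧ I ⊆ Δ ∧ ∀ a ∈ I, ∀ b ∈ Δ, a + b ∈ I

/-- `A` is an i(S)-pertinent set. -/
def IsPertinent (A S : Set ℕ) : Prop :=
  A ⊆ PF S ∧ ∀ a ∈ A, ∀ b ∈ A, a + b ∈ PF S → a + b ∈ A

/-- Iterates 𝒥^k(ℕ): 𝒥^0(ℕ) = {ℕ}, 𝒥^{k+1}(ℕ) = 𝒥(𝒥^k(ℕ)). -/
def Jiter : ℕ → Set (Set ℕ)
  | 0 => {Set.univ}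
  | k + 1 => {S | IsNumSgp S ∧ ∃ Δ ∈ Jiter k, IsIdealOf (S \ {0}) Δ}

/-- An i-chain of length `n` connecting `S` and `T`. -/
def IsIChain (n : ℕ) (c : ℕ → Set ℕ) (S T : Set ℕ) : Prop :=
  c 0 = S ∧ c n = T ∧ (∀ i ≤ n, IsNumSgp (c i)) ∧
    ∀ i < n, c i ⊆ c (i + 1) ∧ IsIdealOf (c i \ {0}) (c (i + 1))

/-- The complexity of a numerical semigroup. -/
noncomputable def complexity (S : Set ℕ) : ℕ := sInf {k | S ∈ Jiter k}

/-- The multiplicity: the least nonzero element. -/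
noncomputable def mult (S : Set ℕ) : ℕ := sInf (S \ {0})

/-- The Frobenius number, as an integer: the largest integer not in `S`. -/
noncomputable def Frob (S : Set ℕ) : ℤ := sSup {z : ℤ | ¬ ∃ n ∈ S, (n : ℤ) = z}

/-- Ordinary numerical semigroup. -/
def IsOrdinary (S : Set ℕ) : Prop := S = {0} ∪ {x : ℕ | mult S ≤ x}

/-- The set γ(S) = {x ∈ ℕ \ S : ⌊F(S)/m(S)⌋·m(S) ≤ x ≤ F(S)}. -/
noncomputable def gamma (S : Set ℕ) : Set ℕ :=
  {x : ℕ | x ∉ S ∧ ⌊(Frob S : ℚ) / (mult S : ℚ)⌋ * (mult S : ℤ) ≤ (x : ℤ) ∧ (x : ℤ) ≤ Frob S}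

/-- The minimal system of generators of `T`: the elements of `T` that are not
generated by the other elements. -/
def msg (T : Set ℕ) : Set ℕ :=
  {x ∈ T | x ∉ (AddSubmonoid.closure (T \ {x}) : Set ℕ)}

/-- every numerical semigroup lies in some `𝒥^k(ℕ)`. -/
lemma stmt8_aux (n : ℕ) : ∀ S : Set ℕ, IsNumSgp S → Sᶜ.ncard = n →
    ∃ k : ℕ, S ∈ Jiter k := by
  induction n using Nat.strong_induction_on with
  | _ n ih =>
    intro S hS hn
    obtain ⟨h0, hadd, hfin⟩ := hS
    rcases Set.eq_empty_or_nonempty Sᶜ with hc | hc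
    · refine ⟨0, ?_⟩
      have : S = Set.univ := by
        rw [← Set.compl_empty_iff]; exact hc
      simp [Jiter, this]
    · -- F = max of the complement
      obtain ⟨F, hFmem, hFmax⟩ := Set.Finite.exists_maximalFor id _ hfin hc
      simp only [id] at hFmax
      have hbig : ∀ x, F < x → x ∈ S := by
        intro x hx
        by_contra hxS
        have := hFmax hxS (le_of_lt hx)
        omega
      have hF0 : F ≠ 0 := fun h => hFmem (h ▸ h0)
      set T : Set ℕ := insert F S with hT
      have hTsgp : IsNumSgp T := by
        refine ⟨Set.mem_insert_of_mem _ h0, ?_, ?_⟩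
        · intro a ha b hb
          rcases ha with ha | ha <;> rcases hb with hb | hb
          · subst ha hb; exact Set.mem_insert_of_mem _ (hbig _ (by omega))
          · subst ha
            rcases Nat.eq_zero_or_pos b with hb0 | hb0
            · subst hb0; simp [hT]
            · exact Set.mem_insert_of_mem _ (hbig _ (by omega))
          · subst hb
            rcases Nat.eq_zero_or_pos a with ha0 | ha0
            · subst ha0; simp [hT]
            · exact Set.mem_insert_of_mem _ (hbig _ (by omega))
          · exact Set.mem_insert_of_mem _ (hadd a ha b hb)
        · exact hfin.subset (by
            intro x hx
            simp only [hT, Set.mem_compl_iff, Set.mem_insert_iff, not_or] at hx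
            exact hx.2)
      have hTc : Tᶜ = Sᶜ \ {F} := by
        ext x
        simp only [hT, Set.mem_compl_iff, Set.mem_insert_iff, not_or, Set.mem_diff,
          Set.mem_singleton_iff]
        tauto
      have hTcard : Tᶜ.ncard < n := by
        rw [hTc, Set.ncard_diff_singleton_of_mem hFmem]
        have hpos : 0 < Sᶜ.ncard := (Set.ncard_pos hfin).mpr hc
        omega
      obtain ⟨k, hk⟩ := ih _ hTcard T hTsgp rfl
      refine ⟨k + 1, ⟨⟨h0, hadd, hfin⟩, T, hk, ?_, ?_, ?_⟩⟩
      · exact ⟨F + 1, hbig _ (by omega), by simp⟩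
      · exact fun x hx => Set.mem_insert_of_mem _ hx.1
      · rintro a ⟨haS, ha0⟩ b hb
        simp only [Set.mem_singleton_iff] at ha0
        rcases hb with hb | hb
        · subst hb
          exact ⟨hbig _ (by omega), by simp; omega⟩
        · exact ⟨hadd a haS b hb, by simp; omega⟩

theorem stmt8 (S : Set ℕ) (hS : IsNumSgp S) :
    ∃ k : ℕ, S ∈ Jiter k :=
  stmt8_aux _ S hS rfl
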